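/- Let M be the d₁d₂ × d₁d₂ square with constant rows M(l,c) = l, and define the product basis |ψ_{n,m,l}⟩ = (1/√(d₁d₂)) Σ_{i,j} ω_{d₁}^{ni} ω_{d₂}^{mj} |i⟩ ⊗ |j⟩ ⊗ |l⟩ in C^{d₁} ⊗ C^{d₂} ⊗ C^{d₁d₂}. Then: (a) {|ψ_{n,m,l}⟩} is an orthonormal basis consisting of product vectors, and (b) for any Latin square L of order d₁d₂ with associated basis |φ_{n,m,l}⟩ = (1/√(d₁d₂)) Σ_{i,j} ω_{d₁}^{ni} ω_{d₂}^{mj} |i⟩ ⊗ |j⟩ ⊗ |L(l, f(i,j))⟩, the two bases are mutually unbiased: |⟨φ_{n',m',l'} | ψ_{n,m,l}⟩| = 1/(d₁d₂) for all indices. -/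

import Mathlib

open Complex

/-- Component at `|i⟩⊗|j⟩⊗|r⟩` of the product-basis vector `|ψ_{n,m,l}⟩` built from the
constant-rows square `M(l,c) = l`. -/
noncomputable def psiProd (d₁ d₂ : ℕ)
    (n : ZMod d₁) (m : ZMod d₂) (l : ZMod (d₁ * d₂))
    (i : ZMod d₁) (j : ZMod d₂) (r : ZMod (d₁ * d₂)) : ℂ :=
  ((Real.sqrt (d₁ * d₂) : ℂ))⁻¹ *
    Complex.exp (2 * Real.pi * Complex.I / d₁) ^ (n.val * i.val) *
    Complex.exp (2 * Real.pi * Complex.I / d₂) ^ (m.val * j.val) *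
    (if r = l then 1 else 0)

/-- The same vector viewed in `EuclideanSpace`. -/
noncomputable def psiProdVec (d₁ d₂ : ℕ) [NeZero d₁] [NeZero d₂] [NeZero (d₁ * d₂)]
    (nml : ZMod d₁ × ZMod d₂ × ZMod (d₁ * d₂)) :
    EuclideanSpace ℂ (ZMod d₁ × ZMod d₂ × ZMod (d₁ * d₂)) :=
  WithLp.toLp 2 (fun ijr : ZMod d₁ × ZMod d₂ × ZMod (d₁ * d₂) =>
    psiProd d₁ d₂ nml.1 nml.2.1 nml.2.2 ijr.1 ijr.2.1 ijr.2.2)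

/-- Component of the Latin-square basis vector `|φ_{n,m,l}⟩`, with `f(i,j) = d₂·i + j`. -/
noncomputable def phiC2 (d₁ d₂ : ℕ)
    (L : ZMod (d₁ * d₂) → ZMod (d₁ * d₂) → ZMod (d₁ * d₂))
    (n : ZMod d₁) (m : ZMod d₂) (l : ZMod (d₁ * d₂))
    (i : ZMod d₁) (j : ZMod d₂) (r : ZMod (d₁ * d₂)) : ℂ :=
  ((Real.sqrt (d₁ * d₂) : ℂ))⁻¹ *
    Complex.exp (2 * Real.pi * Complex.I / d₁) ^ (n.val * i.val) *
    Complex.exp (2 * Real.pi * Complex.I / d₂) ^ (m.val * j.val) *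
    (if L l (((d₂ * i.val + j.val : ℕ)) : ZMod (d₁ * d₂)) = r then 1 else 0)

lemma sum_zmod_val (d : ℕ) [NeZero d] (g : ℕ → ℂ) :
    ∑ i : ZMod d, g i.val = ∑ k ∈ Finset.range d, g k := by
  obtain ⟨n, rfl⟩ := Nat.exists_eq_succ_of_ne_zero (NeZero.ne d)
  exact Fin.sum_univ_eq_sum_range (fun k => g k) (n+1)

lemma omega_sum (d : ℕ) [NeZero d] (a b : ZMod d) :
    ∑ i : ZMod d, (starRingEnd ℂ) (Complex.exp (2 * Real.pi * Complex.I / d) ^ (a.val * i.val)) *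
      Complex.exp (2 * Real.pi * Complex.I / d) ^ (b.val * i.val)
      = if a = b then (d : ℂ) else 0 := by
  set ω : ℂ := Complex.exp (2 * Real.pi * Complex.I / d) with hω
  have hprim : IsPrimitiveRoot ω d := Complex.isPrimitiveRoot_exp d (NeZero.ne d)
  have hω0 : ω ≠ 0 := Complex.exp_ne_zero _
  have hconj : (starRingEnd ℂ) ω = ω⁻¹ := by
    rw [hω, ← Complex.exp_conj, ← Complex.exp_neg]
    congr 1
    simp [map_div₀, Complex.conj_I, map_ofNat]
    ring
  set ζ : ℂ := ω ^ ((b.val : ℤ) - (a.val : ℤ)) with hζ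
  have hterm : ∀ i : ZMod d,
      (starRingEnd ℂ) (ω ^ (a.val * i.val)) * ω ^ (b.val * i.val) = ζ ^ i.val := by
    intro i
    rw [map_pow, hconj, ← zpow_natCast ω⁻¹, ← zpow_natCast ω, inv_zpow, ← zpow_neg,
      ← zpow_add₀ hω0, ← zpow_natCast ζ, hζ, ← zpow_mul]
    congr 1
    push_cast
    ring
  rw [Finset.sum_congr rfl (fun i _ => hterm i), sum_zmod_val d (fun k => ζ ^ k)]
  by_cases hab : a = b
  · subst hab
    have : ζ = 1 := by rw [hζ]; simp
    simp [this]
  · have hζ1 : ζ ≠ 1 := by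
      intro h
      rw [hζ, (hprim.zpow_eq_one_iff_dvd _)] at h
      have : a.val ≡ b.val [MOD d] := (Nat.modEq_iff_dvd).2 h
      have := (ZMod.natCast_eq_natCast_iff _ _ _).2 this
      simp only [ZMod.natCast_val, ZMod.cast_id] at this
      exact hab this
    have hζd : ζ ^ d = 1 := by
      rw [hζ, ← zpow_natCast, ← zpow_mul, mul_comm, zpow_mul, zpow_natCast,
        hprim.pow_eq_one, one_zpow]
    rw [geom_sum_eq hζ1, hζd]
    simp [hab]

lemma f_bijective (d₁ d₂ : ℕ) [NeZero d₁] [NeZero d₂] :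
    Function.Bijective (fun p : ZMod d₁ × ZMod d₂ =>
      ((d₂ * p.1.val + p.2.val : ℕ) : ZMod (d₁ * d₂))) := by
  have : NeZero (d₁ * d₂) := ⟨Nat.mul_ne_zero (NeZero.ne d₁) (NeZero.ne d₂)⟩
  rw [Fintype.bijective_iff_injective_and_card]
  constructor
  · rintro ⟨i, j⟩ ⟨i', j'⟩ h
    simp only at h
    have hb : ∀ (i : ZMod d₁) (j : ZMod d₂), d₂ * i.val + j.val < d₁ * d₂ := by
      intro i j
      have hi := i.val_lt
      have hj := j.val_lt
      calc d₂ * i.val + j.val < d₂ * i.val + d₂ := by omega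
        _ = d₂ * (i.val + 1) := by ring
        _ ≤ d₂ * d₁ := Nat.mul_le_mul_left _ (by omega)
        _ = d₁ * d₂ := Nat.mul_comm _ _
    have h2 : d₂ * i.val + j.val = d₂ * i'.val + j'.val := by
      have := congrArg ZMod.val h
      rwa [ZMod.val_cast_of_lt (hb i j), ZMod.val_cast_of_lt (hb i' j')] at this
    have hd2 : 0 < d₂ := Nat.pos_of_ne_zero (NeZero.ne d₂)
    have hj : j.val = j'.val := by
      have := congrArg (· % d₂) h2
      simpa [Nat.add_mul_mod_self_left, Nat.mul_add_mod, Nat.mod_eq_of_lt j.val_lt,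
        Nat.mod_eq_of_lt j'.val_lt] using this
    have hi : i.val = i'.val := by
      have h3 : d₂ * i.val = d₂ * i'.val := by omega
      exact Nat.eq_of_mul_eq_mul_left hd2 h3
    exact Prod.ext (ZMod.val_injective _ hi) (ZMod.val_injective _ hj)
  · simp [ZMod.card]

lemma abs_omega (d : ℕ) :
    ‖Complex.exp (2 * Real.pi * Complex.I / d)‖ = 1 := by
  have : (2 * Real.pi * Complex.I / d) = ((2 * Real.pi / d : ℝ) : ℂ) * Complex.I := by
    push_cast; ring
  rw [this, Complex.norm_exp_ofReal_mul_I]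

lemma sum3_factor {α β γ : Type*} [Fintype α] [Fintype β] [Fintype γ]
    (K : ℂ) (F : α → ℂ) (G : β → ℂ) (H : γ → ℂ) :
    ∑ i : α, ∑ j : β, ∑ r : γ, K * (F i * G j * H r)
      = K * (∑ i, F i) * (∑ j, G j) * (∑ r, H r) := by
  simp_rw [← Finset.mul_sum, ← Finset.sum_mul, ← Finset.sum_mul_sum]
  ring

/-- (a) the vectors `|ψ_{n,m,l}⟩` form an orthonormal basis of
`C^{d₁} ⊗ C^{d₂} ⊗ C^{d₁d₂}` consisting of product vectors, and (b) this basis is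
mutually unbiased with the basis `|φ_{n,m,l}⟩` associated to any Latin square `L` of
order `d₁d₂`: all pairwise inner products have modulus `1/(d₁d₂)`. -/
theorem product_basis_mub (d₁ d₂ : ℕ) [NeZero d₁] [NeZero d₂] [NeZero (d₁ * d₂)]
    (L : ZMod (d₁ * d₂) → ZMod (d₁ * d₂) → ZMod (d₁ * d₂))
    (hrow : ∀ l, Function.Bijective (L l))
    (hcol : ∀ c, Function.Bijective fun l => L l c) :
    Orthonormal ℂ (psiProdVec d₁ d₂) ∧
    Submodule.span ℂ (Set.range (psiProdVec d₁ d₂)) = ⊤ ∧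
    (∀ n : ZMod d₁, ∀ m : ZMod d₂, ∀ l : ZMod (d₁ * d₂),
      ∃ (u : ZMod d₁ → ℂ) (v : ZMod d₂ → ℂ) (w : ZMod (d₁ * d₂) → ℂ),
        ∀ i j r, psiProd d₁ d₂ n m l i j r = u i * v j * w r) ∧
    (∀ n' n : ZMod d₁, ∀ m' m : ZMod d₂, ∀ l' l : ZMod (d₁ * d₂),
      ‖(∑ i : ZMod d₁, ∑ j : ZMod d₂, ∑ r : ZMod (d₁ * d₂),
        (starRingEnd ℂ) (phiC2 d₁ d₂ L n' m' l' i j r) * psiProd d₁ d₂ n m l i j r)‖ =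
        ((d₁ : ℝ) * d₂)⁻¹) := by
  have hd1 : (d₁ : ℝ) ≠ 0 := Nat.cast_ne_zero.2 (NeZero.ne d₁)
  have hd2 : (d₂ : ℝ) ≠ 0 := Nat.cast_ne_zero.2 (NeZero.ne d₂)
  have hc1 : (d₁ : ℂ) ≠ 0 := Nat.cast_ne_zero.2 (NeZero.ne d₁)
  have hc2 : (d₂ : ℂ) ≠ 0 := Nat.cast_ne_zero.2 (NeZero.ne d₂)
  set s : ℂ := ((Real.sqrt ((d₁ : ℝ) * (d₂ : ℝ)) : ℂ))⁻¹ with hsdef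
  have hsconj : (starRingEnd ℂ) s = s := by
    rw [hsdef, map_inv₀, Complex.conj_ofReal]
  have hss : s * s = ((((d₁ : ℝ) * d₂) : ℝ) : ℂ)⁻¹ := by
    rw [hsdef, ← mul_inv, ← Complex.ofReal_mul,
      Real.mul_self_sqrt (by positivity)]
  -- conj of the indicator
  have hconj_ite : ∀ (p : Prop) [Decidable p],
      (starRingEnd ℂ) (if p then 1 else 0) = if p then 1 else 0 := by
    intro p _; split <;> simp
  have horth : Orthonormal ℂ (psiProdVec d₁ d₂) := by
    rw [orthonormal_iff_ite]
    rintro ⟨n, m, l⟩ ⟨n', m', l'⟩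
    rw [PiLp.inner_apply]
    simp_rw [RCLike.inner_apply']
    rw [Fintype.sum_prod_type]
    simp_rw [Fintype.sum_prod_type]
    have hterm : ∀ (i : ZMod d₁) (j : ZMod d₂) (r : ZMod (d₁ * d₂)),
        (starRingEnd ℂ) (psiProdVec d₁ d₂ (n, m, l) (i, j, r)) *
          psiProdVec d₁ d₂ (n', m', l') (i, j, r)
        = (s * s) *
            (((starRingEnd ℂ) (Complex.exp (2 * Real.pi * Complex.I / d₁) ^ (n.val * i.val)) *
               Complex.exp (2 * Real.pi * Complex.I / d₁) ^ (n'.val * i.val)) *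
             ((starRingEnd ℂ) (Complex.exp (2 * Real.pi * Complex.I / d₂) ^ (m.val * j.val)) *
               Complex.exp (2 * Real.pi * Complex.I / d₂) ^ (m'.val * j.val)) *
             ((if r = l then 1 else 0) * (if r = l' then 1 else 0))) := by
      intro i j r
      simp only [psiProdVec, PiLp.toLp_apply, psiProd, ← hsdef, map_mul, hsconj, hconj_ite]
      ring
    simp_rw [hterm]
    rw [sum3_factor, omega_sum, omega_sum]
    have hδ : ∑ r : ZMod (d₁ * d₂), ((if r = l then (1:ℂ) else 0) * (if r = l' then 1 else 0))
        = if l = l' then 1 else 0 := by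
      simp only [ite_mul, one_mul, zero_mul]
      simp [Finset.sum_ite_eq]
    rw [hδ, hss]
    by_cases hn : n = n' <;> by_cases hm : m = m' <;> by_cases hl : l = l' <;>
      simp [hn, hm, hl, Prod.ext_iff] <;>
      · push_cast
        field_simp
        try ring
  refine ⟨horth, ?_, ?_, ?_⟩
  · exact horth.linearIndependent.span_eq_top_of_card_eq_finrank
      (by simp [finrank_euclideanSpace])
  · intro n m l
    refine ⟨fun i => Complex.exp (2 * Real.pi * Complex.I / d₁) ^ (n.val * i.val),
      fun j => Complex.exp (2 * Real.pi * Complex.I / d₂) ^ (m.val * j.val),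
      fun r => s * (if r = l then 1 else 0), fun i j r => ?_⟩
    simp only [psiProd]
    ring
  · intro n' n m' m l' l
    have hgbij : Function.Bijective (fun p : ZMod d₁ × ZMod d₂ =>
        L l' ((d₂ * p.1.val + p.2.val : ℕ) : ZMod (d₁ * d₂))) :=
      (hrow l').comp (f_bijective d₁ d₂)
    obtain ⟨⟨i₀, j₀⟩, hp⟩ := hgbij.surjective l
    simp only at hp
    set C : ZMod d₁ → ZMod d₂ → ℂ := fun i j =>
      (s * s) *
        (((starRingEnd ℂ) (Complex.exp (2 * Real.pi * Complex.I / d₁) ^ (n'.val * i.val)) *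
           Complex.exp (2 * Real.pi * Complex.I / d₁) ^ (n.val * i.val)) *
         ((starRingEnd ℂ) (Complex.exp (2 * Real.pi * Complex.I / d₂) ^ (m'.val * j.val)) *
           Complex.exp (2 * Real.pi * Complex.I / d₂) ^ (m.val * j.val))) with hC
    have hterm : ∀ (i : ZMod d₁) (j : ZMod d₂),
        ∑ r : ZMod (d₁ * d₂),
          (starRingEnd ℂ) (phiC2 d₁ d₂ L n' m' l' i j r) * psiProd d₁ d₂ n m l i j r
        = C i j * (if L l' ((d₂ * i.val + j.val : ℕ) : ZMod (d₁ * d₂)) = l then 1 else 0) := by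
      intro i j
      have : ∀ r : ZMod (d₁ * d₂),
          (starRingEnd ℂ) (phiC2 d₁ d₂ L n' m' l' i j r) * psiProd d₁ d₂ n m l i j r
          = C i j * ((if L l' ((d₂ * i.val + j.val : ℕ) : ZMod (d₁ * d₂)) = r then 1 else 0) *
              (if r = l then 1 else 0)) := by
        intro r
        simp only [phiC2, psiProd, ← hsdef, map_mul, hsconj, hconj_ite, hC]
        ring
      rw [Finset.sum_congr rfl (fun r _ => this r), ← Finset.mul_sum]
      congr 1
      simp only [ite_mul, one_mul, zero_mul]
      simp [Finset.sum_ite_eq']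
    simp_rw [hterm]
    have hzero : ∀ (i : ZMod d₁) (j : ZMod d₂), ¬(i = i₀ ∧ j = j₀) →
        (C i j * (if L l' ((d₂ * i.val + j.val : ℕ) : ZMod (d₁ * d₂)) = l then 1 else 0)) = 0 := by
      intro i j hne
      rw [if_neg, mul_zero]
      intro h
      have := hgbij.injective (a₁ := (i, j)) (a₂ := (i₀, j₀)) (by simpa using h.trans hp.symm)
      exact hne ⟨congrArg Prod.fst this, congrArg Prod.snd this⟩
    rw [Finset.sum_eq_single i₀ (fun i _ hi => by
        rw [Finset.sum_eq_zero]
        intro j _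
        exact hzero i j (fun hc => hi hc.1))
      (fun h => absurd (Finset.mem_univ i₀) h)]
    rw [Finset.sum_eq_single j₀ (fun j _ hj => hzero i₀ j (fun hc => hj hc.2))
      (fun h => absurd (Finset.mem_univ j₀) h)]
    rw [if_pos hp, mul_one, hC]
    simp only [norm_mul, norm_pow, Complex.norm_conj, abs_omega, one_pow, mul_one, one_mul]
    rw [hsdef, norm_inv, Complex.norm_real, Real.norm_of_nonneg (Real.sqrt_nonneg _),
      ← mul_inv, Real.mul_self_sqrt (by positivity)]
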